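/- Let z be a natural number and d' an integer with −(z+1) ≤ d' ≤ z. Then ∑_{l=0}^{z} (−1)^l C(z, l) · C(z+1, l − d') ≠ 0. -/

import Mathlib

/-- Binomial coefficient `C(m, a)` with an integer lower argument: it is `0`
unless `0 ≤ a`, and equals the usual binomial coefficient otherwise
(which is itself `0` when `a > m`). -/
def intChoose (m : ℕ) (a : ℤ) : ℤ := if 0 ≤ a then (m.choose a.toNat : ℤ) else 0

open Polynomial Finset

lemma coeff_one_sub_X_pow (z l : ℕ) :
    ((1 - X : ℤ[X]) ^ z).coeff l = (-1) ^ l * z.choose l := by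
  have h : (1 - X : ℤ[X]) ^ z
      = ∑ k ∈ range (z + 1), C ((-1 : ℤ) ^ k * (z.choose k : ℤ)) * X ^ k := by
    rw [sub_eq_add_neg, add_comm, add_pow]
    refine Finset.sum_congr rfl fun k _ => ?_
    rw [neg_pow, one_pow, mul_one]
    simp only [map_mul, map_pow, map_neg, map_one, C_eq_natCast]
    ring
  rw [h, finset_sum_coeff]
  simp only [coeff_C_mul, coeff_X_pow]
  simp only [mul_ite, mul_one, mul_zero]
  rw [Finset.sum_ite_eq (range (z+1)) l (fun k => ((-1:ℤ)^k * z.choose k))]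
  by_cases hl : l ∈ range (z + 1)
  · simp [hl]
  · rw [if_neg hl]
    rw [Finset.mem_range, not_lt] at hl
    rw [Nat.choose_eq_zero_of_lt (by omega)]
    simp

lemma key_sum (z k : ℕ) :
    ∑ l ∈ range (z + 1),
        (-1 : ℤ) ^ l * (z.choose l : ℤ) * (if l ≤ k then (((z+1).choose (k - l) : ℕ) : ℤ) else 0)
      = (-1) ^ (k / 2) * (z.choose (k / 2) : ℤ) := by
  set f : ℕ → ℤ := fun l =>
    (-1 : ℤ) ^ l * (z.choose l : ℤ) * (if l ≤ k then (((z+1).choose (k - l) : ℕ) : ℤ) else 0) with hf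
  have hP : ((1 - X : ℤ[X]) ^ z * (1 + X) ^ (z + 1)).coeff k = ∑ l ∈ range (z + 1), f l := by
    rw [coeff_mul, Finset.Nat.sum_antidiagonal_eq_sum_range_succ_mk]
    have h1 : ∑ i ∈ range (k + 1),
        ((1 - X : ℤ[X]) ^ z).coeff i * ((1 + X : ℤ[X]) ^ (z + 1)).coeff (k - i)
        = ∑ i ∈ range (k + 1), f i := by
      refine Finset.sum_congr rfl fun i hi => ?_
      rw [Finset.mem_range] at hi
      rw [hf]
      simp only [coeff_one_sub_X_pow, coeff_one_add_X_pow, if_pos (by omega : i ≤ k)]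
    rw [h1]
    have h2 : ∑ i ∈ range (k + 1), f i = ∑ i ∈ range (z + k + 1), f i := by
      refine Finset.sum_subset (Finset.range_subset_range.2 (by omega)) fun i _ hi => ?_
      rw [Finset.mem_range, not_lt] at hi
      rw [hf]; simp only
      rw [if_neg (by omega)]
      ring
    have h3 : ∑ i ∈ range (z + 1), f i = ∑ i ∈ range (z + k + 1), f i := by
      refine Finset.sum_subset (Finset.range_subset_range.2 (by omega)) fun i _ hi => ?_
      rw [Finset.mem_range, not_lt] at hi
      rw [hf]; simp only
      rw [Nat.choose_eq_zero_of_lt (by omega)]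
      push_cast; ring
    rw [h2, h3]
  have hQ : (1 - X : ℤ[X]) ^ z * (1 + X) ^ (z + 1)
      = (expand ℤ 2 ((1 - X) ^ z)) * (1 + X) := by
    rw [map_pow, map_sub, map_one, expand_X]
    have h4 : (1 - X ^ 2 : ℤ[X]) = (1 - X) * (1 + X) := by ring
    rw [h4, mul_pow, pow_succ]
    ring
  have hmulX : ∀ (p : ℤ[X]) (n : ℕ), (p * X).coeff n = if 1 ≤ n then p.coeff (n - 1) else 0 := by
    intro p n
    rw [← pow_one (X : ℤ[X]), coeff_mul_X_pow']
  rw [← hP, hQ]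
  rw [mul_add, mul_one, coeff_add, hmulX,
      coeff_expand (by norm_num : 0 < 2), coeff_one_sub_X_pow]
  rcases Nat.even_or_odd k with ⟨j, hj⟩ | ⟨j, hj⟩
  · subst hj
    rcases Nat.eq_zero_or_pos (j + j) with h0 | h0
    · simp [Nat.eq_zero_of_add_eq_zero_left h0]
    · rw [if_pos (by omega : 2 ∣ j + j), if_pos (by omega : 1 ≤ j + j),
          coeff_expand (by norm_num : 0 < 2), if_neg (by omega : ¬ 2 ∣ (j + j - 1))]
      have : (j + j) / 2 = j := by omega
      rw [this]; ring
  · subst hj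
    rw [if_neg (by omega : ¬ 2 ∣ (2 * j + 1)), if_pos (by omega : 1 ≤ 2 * j + 1),
        coeff_expand (by norm_num : 0 < 2), if_pos (by omega : 2 ∣ (2 * j + 1 - 1))]
    have h5 : (2 * j + 1 - 1) / 2 = j := by omega
    have h6 : (2 * j + 1) / 2 = j := by omega
    rw [h5, h6, coeff_one_sub_X_pow]
    ring

theorem stmt_4 (z : ℕ) (d' : ℤ) (h1 : -((z : ℤ) + 1) ≤ d') (h2 : d' ≤ (z : ℤ)) :
    ∑ l ∈ Finset.range (z + 1),
        (-1 : ℤ) ^ l * (z.choose l : ℤ) * intChoose (z + 1) ((l : ℤ) - d') ≠ 0 := by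
  set k := (z + 1 + d').toNat with hkdef
  have hk : (k : ℤ) = (z : ℤ) + 1 + d' := Int.toNat_of_nonneg (by omega)
  have hterm : ∀ l ∈ range (z + 1),
      (-1 : ℤ) ^ l * (z.choose l : ℤ) * intChoose (z + 1) ((l : ℤ) - d')
      = (-1 : ℤ) ^ l * (z.choose l : ℤ)
          * (if l ≤ k then (((z+1).choose (k - l) : ℕ) : ℤ) else 0) := by
    intro l hl
    rw [Finset.mem_range] at hl
    congr 1
    unfold intChoose
    by_cases hlk : l ≤ k
    · rw [if_pos hlk]
      by_cases hkl : k - l ≤ z + 1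
      · rw [if_pos (by omega : (0:ℤ) ≤ (l : ℤ) - d')]
        have ht : ((l : ℤ) - d').toNat = (z + 1) - (k - l) := by omega
        rw [ht, Nat.choose_symm (by omega)]
      · rw [if_neg (by omega : ¬ (0:ℤ) ≤ (l : ℤ) - d'),
            Nat.choose_eq_zero_of_lt (by omega)]
        simp
    · rw [if_neg hlk, if_pos (by omega : (0:ℤ) ≤ (l : ℤ) - d')]
      rw [Nat.choose_eq_zero_of_lt (by omega : z + 1 < ((l : ℤ) - d').toNat)]
      simp
  rw [Finset.sum_congr rfl hterm, key_sum]
  have hk2 : k / 2 ≤ z := by omega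
  exact mul_ne_zero (pow_ne_zero _ (by norm_num))
    (Int.natCast_ne_zero.mpr (Nat.choose_pos hk2).ne')
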